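/- n-ary generalization of Böhm's relation between Curry's and Turing's fixed-point combinators: for every n ≥ 1 and every 1 ≤ k ≤ n, the term (Φ_k^n M_1^n ⋯ M_n^n) βη-reduces (in the reflexive-transitive closure of βη-reduction) to Ψ_k^n. -/

import Mathlib

namespace LC

/-- Untyped λ-terms, de Bruijn indices. -/
inductive Tm : Type
  | var : ℕ → Tm
  | app : Tm → Tm → Tm
  | lam : Tm → Tm
  deriving DecidableEq

namespace Tm

/-- Shift the free variables ≥ c up by one. -/
def lift (c : ℕ) : Tm → Tm
  | var n => if n < c then var n else var (n + 1)
  | app a b => app (lift c a) (lift c b)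
  | lam a => lam (lift (c + 1) a)

/-- Substitute `s` for the free variable `k`. -/
def subst (k : ℕ) (s : Tm) : Tm → Tm
  | var n => if n = k then s else if k < n then var (n - 1) else var n
  | app a b => app (subst k s a) (subst k s b)
  | lam a => lam (subst (k + 1) (lift 0 s) a)

/-- One-step βη-reduction (with congruence closure). -/
inductive Step : Tm → Tm → Prop
  | beta (a b : Tm) : Step (app (lam a) b) (subst 0 b a)
  | eta (a : Tm) : Step (lam (app (lift 0 a) (var 0))) a
  | appL {a a' : Tm} (b : Tm) : Step a a' → Step (app a b) (app a' b)
  | appR (a : Tm) {b b' : Tm} : Step b b' → Step (app a b) (app a b')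
  | lamCongr {a a' : Tm} : Step a a' → Step (lam a) (lam a')

/-- βη-equivalence: the equivalence relation generated by βη-reduction. -/
def BetaEta : Tm → Tm → Prop := Relation.EqvGen Step

/-- Multi-step βη-reduction: reflexive-transitive closure of βη-reduction. -/
def Reduces : Tm → Tm → Prop := Relation.ReflTransGen Step

/-- I = λx.x -/
def I : Tm := lam (var 0)
/-- K = λxy.x -/
def K : Tm := lam (lam (var 1))
/-- B = λxyz.(x (y z)) -/
def B : Tm := lam (lam (lam (app (var 2) (app (var 1) (var 0)))))
/-- C = λxyz.(x z y) -/
def C : Tm := lam (lam (lam (app (app (var 2) (var 0)) (var 1))))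
/-- S = λxyz.(x z (y z)) -/
def S : Tm := lam (lam (lam (app (app (var 2) (var 0)) (app (var 1) (var 0)))))

/-- body of the n-th Church numeral: s (s ⋯ (s z)⋯), n times. -/
def churchBody : ℕ → Tm
  | 0 => var 0
  | n + 1 => app (var 1) (churchBody n)

/-- The n-th Church numeral c_n = λsz.(s (s ⋯ (s z)⋯)). -/
def church (n : ℕ) : Tm := lam (lam (churchBody n))

/-- n nested λ-abstractions. -/
def lamN : ℕ → Tm → Tm
  | 0, t => t
  | n + 1, t => lam (lamN n t)

/-- Shift all free variables up by n. -/
def liftN (n : ℕ) (t : Tm) : Tm := (lift 0)^[n] t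

/-- t (var (a+k-1)) ⋯ (var (a+1)) (var a) : left-associated application of t
to k variables with descending indices. -/
def appVars (t : Tm) (a k : ℕ) : Tm :=
  ((List.range k).reverse).foldl (fun s i => app s (var (a + i))) t

/-- t (var a) (var (a+1)) ⋯ (var (a+k-1)) : left-associated application of t
to k variables with ascending indices. -/
def appVarsAsc (t : Tm) (a k : ℕ) : Tm :=
  (List.range k).foldl (fun s i => app s (var (a + i))) t

/-- Left-associated application of t to a list of terms. -/
def appList (t : Tm) (l : List Tm) : Tm := l.foldl app t

/-- K_n = λp x_1…x_n. p -/
def Kn (n : ℕ) : Tm := lamN (n + 1) (var n)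
/-- S_n = λpq x_1…x_n.(p x_1⋯x_n (q x_1⋯x_n)) -/
def Sn (n : ℕ) : Tm :=
  lamN (n + 2) (app (appVars (var (n + 1)) 0 n) (appVars (var n) 0 n))
/-- B_n = λpq x_1…x_n.(p (q x_1⋯x_n)) -/
def Bn (n : ℕ) : Tm := lamN (n + 2) (app (var (n + 1)) (appVars (var n) 0 n))
/-- C_n = λpq x_1…x_n.(p x_1⋯x_n q) -/
def Cn (n : ℕ) : Tm := lamN (n + 2) (app (appVars (var (n + 1)) 0 n) (var n))


/-- W_i = λx_1…x_n.(f_i (x_1 x_1 ⋯ x_n) ⋯ (x_n x_1 ⋯ x_n)); here f_i is the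
variable of index 2n - i, bound by the surrounding λf_1…f_n. -/
def W (n j : ℕ) : Tm :=
  lamN n (((List.range n).reverse).foldl
    (fun s i => app s (appVars (var i) 0 n)) (var (2 * n - j)))

/-- Curry's n-ary multiple fixed-point combinator Φ_j^n = λf_1…f_n.(W_j W_1 ⋯ W_n). -/
def Phi (n k : ℕ) : Tm :=
  lamN n (appList (W n k) ((List.range n).map fun i => W n (i + 1)))

/-- V_i = λx_1…x_n f_1…f_n.(f_i (x_1 x_1 ⋯ x_n f_1 ⋯ f_n) ⋯ (x_n x_1 ⋯ x_n f_1 ⋯ f_n)). -/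
def V (n j : ℕ) : Tm :=
  lamN (2 * n) (((List.range n).reverse).foldl
    (fun s i => app s (appVars (appVars (var (n + i)) n n) 0 n)) (var (n - j)))

/-- Turing's n-ary multiple fixed-point combinator Ψ_j^n = (V_j V_1 ⋯ V_n). -/
def Psi (n k : ℕ) : Tm :=
  appList (V n k) ((List.range n).map fun i => V n (i + 1))

/-- M_j^n = λφ_1…φ_n x_1…x_n.(x_j (φ_1 x_1 ⋯ x_n) ⋯ (φ_n x_1 ⋯ x_n)).
Under the 2n binders, φ_i = var (2n - i) and x_j = var (n - j). -/
def M (n j : ℕ) : Tm :=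
  lamN (2 * n) (((List.range n).reverse).foldl
    (fun s i => app s (appVars (var (n + i)) 0 n)) (var (n - j)))

/-! ### Auxiliary machinery -/

theorem appList_nil (t : Tm) : appList t [] = t := rfl

theorem appList_cons (t a : Tm) (l : List Tm) : appList t (a :: l) = appList (app t a) l := rfl

theorem foldl_app_eq (g : ℕ → Tm) (l : List ℕ) (t : Tm) :
    l.foldl (fun s i => app s (g i)) t = appList t (l.map g) := by
  rw [appList, List.foldl_map]

theorem lamN_add (a b : ℕ) (t : Tm) : lamN (a + b) t = lamN a (lamN b t) := by
  induction a with
  | zero => simp [lamN, Nat.zero_add]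
  | succ a ih => rw [Nat.succ_add]; show lam (lamN (a+b) t) = lam (lamN a (lamN b t)); rw [ih]

theorem liftN_zero (t : Tm) : liftN 0 t = t := rfl

theorem liftN_succ (m : ℕ) (t : Tm) : liftN (m + 1) t = liftN m (lift 0 t) :=
  Function.iterate_succ_apply _ _ _

theorem liftN_add (a b : ℕ) (t : Tm) : liftN (a + b) t = liftN a (liftN b t) :=
  Function.iterate_add_apply _ _ _ _

theorem lift_var_ge {c v : ℕ} (h : c ≤ v) : lift c (var v) = var (v + 1) := by
  simp only [lift]; rw [if_neg (by omega)]

theorem liftN_var (m v : ℕ) : liftN m (var v) = var (v + m) := by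
  induction m generalizing v with
  | zero => rfl
  | succ m ih =>
    rw [liftN_succ, lift_var_ge (Nat.zero_le v), ih]
    congr 1; omega

theorem liftN_app (m : ℕ) (a b : Tm) : liftN m (app a b) = app (liftN m a) (liftN m b) := by
  induction m generalizing a b with
  | zero => rfl
  | succ m ih =>
    rw [liftN_succ, liftN_succ, liftN_succ]
    show liftN m (app (lift 0 a) (lift 0 b)) = _
    rw [ih]

def ClosedBelow : ℕ → Tm → Prop
  | c, var n => n < c
  | c, app a b => ClosedBelow c a ∧ ClosedBelow c b
  | c, lam a => ClosedBelow (c + 1) a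

def LamFree : Tm → Prop
  | var _ => True
  | app a b => LamFree a ∧ LamFree b
  | lam _ => False

theorem closedBelow_var {v c : ℕ} (h : v < c) : ClosedBelow c (var v) := h

theorem closedBelow_app {a b : Tm} {c : ℕ} (ha : ClosedBelow c a) (hb : ClosedBelow c b) :
    ClosedBelow c (app a b) := ⟨ha, hb⟩

theorem closedBelow_mono : ∀ (t : Tm) {c c' : ℕ}, c ≤ c' → ClosedBelow c t → ClosedBelow c' t
  | var _, _, _, h, ht => lt_of_lt_of_le ht h
  | app a b, _, _, h, ht => ⟨closedBelow_mono a h ht.1, closedBelow_mono b h ht.2⟩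
  | lam a, _, _, h, ht => closedBelow_mono a (Nat.succ_le_succ h) ht

theorem lift_closed : ∀ (t : Tm) {c c' : ℕ}, c ≤ c' → ClosedBelow c t → lift c' t = t
  | var n, c, c', h, ht => by
    simp only [lift]; rw [if_pos (show n < c' from lt_of_lt_of_le ht h)]
  | app a b, _, _, h, ht => by
    show app _ _ = app a b
    rw [lift_closed a h ht.1, lift_closed b h ht.2]
  | lam a, _, _, h, ht => by
    show lam _ = lam a
    rw [lift_closed a (Nat.succ_le_succ h) ht]

theorem liftN_closed (m : ℕ) {t : Tm} (ht : ClosedBelow 0 t) : liftN m t = t := by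
  induction m with
  | zero => rfl
  | succ m ih => rw [liftN_succ, lift_closed t (Nat.le_refl 0) ht, ih]

theorem subst_var_lt {v k : ℕ} (h : v < k) (s : Tm) : subst k s (var v) = var v := by
  simp only [subst]; rw [if_neg (by omega), if_neg (by omega)]

theorem subst_var_self (k : ℕ) (s : Tm) : subst k s (var k) = s := by simp [subst]

theorem subst_var_gt {v k : ℕ} (h : k < v) (s : Tm) : subst k s (var v) = var (v - 1) := by
  simp only [subst]; rw [if_neg (by omega), if_pos h]

theorem subst_closed : ∀ (t : Tm) {c k : ℕ} (s : Tm), c ≤ k → ClosedBelow c t → subst k s t = t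
  | var n, _, _, s, h, ht => subst_var_lt (lt_of_lt_of_le ht h) s
  | app a b, _, _, s, h, ht => by
    show app _ _ = app a b
    rw [subst_closed a s h ht.1, subst_closed b s h ht.2]
  | lam a, _, _, s, h, ht => by
    show lam _ = lam a
    rw [subst_closed a _ (Nat.succ_le_succ h) ht]

theorem subst_lamN (m : ℕ) : ∀ (k : ℕ) (s t : Tm),
    subst k s (lamN m t) = lamN m (subst (k + m) (liftN m s) t) := by
  induction m with
  | zero => intro k s t; rfl
  | succ m ih =>
    intro k s t
    show lam (subst (k+1) (lift 0 s) (lamN m t)) = lam (lamN m (subst (k + (m+1)) (liftN (m+1) s) t))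
    rw [ih, liftN_succ]
    have : k + 1 + m = k + (m + 1) := by omega
    rw [this]

theorem appVars_zero (t : Tm) (a : ℕ) : appVars t a 0 = t := rfl

theorem appVars_succ (t : Tm) (a k : ℕ) :
    appVars t a (k + 1) = appVars (app t (var (a + k))) a k := by
  unfold appVars
  rw [List.range_succ, List.reverse_append]
  rfl

theorem subst_appVars (p : ℕ) : ∀ (t : Tm) {k a : ℕ} (s : Tm), a + p ≤ k →
    subst k s (appVars t a p) = appVars (subst k s t) a p := by
  induction p with
  | zero => intros; rfl
  | succ p ih =>
    intro t k a s h
    rw [appVars_succ, appVars_succ, ih _ _ (by omega)]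
    have : subst k s (app t (var (a + p))) = app (subst k s t) (var (a + p)) := by
      show app _ _ = _
      rw [subst_var_lt (show a + p < k by omega)]
    rw [this]

theorem liftN_appVars (p : ℕ) : ∀ (t : Tm) (a m : ℕ),
    liftN m (appVars t a p) = appVars (liftN m t) (a + m) p := by
  induction p with
  | zero => intros; rfl
  | succ p ih =>
    intro t a m
    rw [appVars_succ, appVars_succ, ih]
    rw [liftN_app, liftN_var]
    have : a + p + m = a + m + p := by omega
    rw [this]

theorem closedBelow_appVars (p : ℕ) : ∀ (t : Tm) {a c : ℕ}, ClosedBelow c t → a + p ≤ c →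
    ClosedBelow c (appVars t a p) := by
  induction p with
  | zero => intro t a c ht _; exact ht
  | succ p ih =>
    intro t a c ht h
    rw [appVars_succ]
    exact ih _ ⟨ht, closedBelow_var (by omega)⟩ (by omega)

theorem lamFree_appVars (p : ℕ) : ∀ (t : Tm) {a : ℕ}, LamFree t → LamFree (appVars t a p) := by
  induction p with
  | zero => intro t a ht; exact ht
  | succ p ih =>
    intro t a ht
    rw [appVars_succ]
    exact ih _ ⟨ht, trivial⟩

theorem closedBelow_appList : ∀ (l : List Tm) (t : Tm) {c : ℕ}, ClosedBelow c t →
    (∀ a ∈ l, ClosedBelow c a) → ClosedBelow c (appList t l)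
  | [], _, _, ht, _ => ht
  | a :: l, t, _, ht, hl =>
    closedBelow_appList l (app t a) ⟨ht, hl a (by simp)⟩ fun x hx => hl x (by simp [hx])

theorem closedBelow_lamN (m : ℕ) : ∀ {c : ℕ} {t : Tm}, ClosedBelow (c + m) t →
    ClosedBelow c (lamN m t) := by
  induction m with
  | zero => intro c t h; exact h
  | succ m ih =>
    intro c t h
    show ClosedBelow (c + 1) (lamN m t)
    apply ih
    have : c + 1 + m = c + (m + 1) := by omega
    rw [this]; exact h

theorem subst_appList : ∀ (l : List Tm) (k : ℕ) (s t : Tm),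
    subst k s (appList t l) = appList (subst k s t) (l.map (subst k s))
  | [], _, _, _ => rfl
  | a :: l, k, s, t => by
    rw [appList_cons, subst_appList l, List.map_cons, appList_cons]
    rfl

theorem subst_liftN_succ : ∀ (t : Tm), LamFree t → ∀ (k : ℕ) (s : Tm),
    subst k s (liftN (k + 1) t) = liftN k t
  | var v, _, k, s => by
    rw [liftN_var, liftN_var, subst_var_gt (by omega)]
    have : v + (k + 1) - 1 = v + k := by omega
    rw [this]
  | app a b, hf, k, s => by
    rw [liftN_app, liftN_app]
    show app (subst k s _) (subst k s _) = _
    rw [subst_liftN_succ a hf.1, subst_liftN_succ b hf.2]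
  | lam _, hf, _, _ => hf.elim

def msubA (m : ℕ) : List Tm → Tm → Tm
  | [], t => t
  | b :: bs, t => msubA m bs (subst (m + bs.length) (liftN (m + bs.length) b) t)

theorem msubA_lamN : ∀ (bs : List Tm) (m' m : ℕ) (t : Tm),
    msubA m' bs (lamN m t) = lamN m (msubA (m' + m) bs t)
  | [], _, _, _ => rfl
  | b :: bs, m', m, t => by
    show msubA m' bs (subst (m' + bs.length) (liftN (m' + bs.length) b) (lamN m t)) = _
    rw [subst_lamN, ← liftN_add, msubA_lamN bs]
    have e1 : m' + bs.length + m = m' + m + bs.length := by omega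
    have e2 : m + (m' + bs.length) = m' + m + bs.length := by omega
    rw [e1, e2]
    rfl

theorem msubA_closed : ∀ (bs : List Tm) {m : ℕ} {t : Tm}, ClosedBelow m t → msubA m bs t = t
  | [], _, _, _ => rfl
  | b :: bs, m, t, ht => by
    show msubA m bs (subst (m + bs.length) _ t) = t
    rw [subst_closed t _ (Nat.le_add_right m bs.length) ht, msubA_closed bs ht]

theorem msubA_appList : ∀ (bs : List Tm) (m : ℕ) (t : Tm) (l : List Tm),
    msubA m bs (appList t l) = appList (msubA m bs t) (l.map (msubA m bs))
  | [], m, t, l => by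
    show appList t l = appList t (l.map (msubA m []))
    have h0 : l.map (msubA m []) = l.map id := List.map_congr_left fun a _ => rfl
    rw [h0, List.map_id]
  | b :: bs, m, t, l => by
    show msubA m bs (subst (m + bs.length) (liftN (m + bs.length) b) (appList t l)) = _
    rw [subst_appList, msubA_appList bs, List.map_map]
    rfl

theorem red_refl {a : Tm} : Reduces a a := Relation.ReflTransGen.refl

theorem red_appL {a a' b : Tm} (h : Reduces a a') : Reduces (app a b) (app a' b) :=
  Relation.ReflTransGen.lift (fun x => app x b) (fun _ _ hs => Step.appL b hs) _ _ h

theorem red_appR {a b b' : Tm} (h : Reduces b b') : Reduces (app a b) (app a b') :=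
  Relation.ReflTransGen.lift (fun x => app a x) (fun _ _ hs => Step.appR a hs) _ _ h

theorem red_app {a a' b b' : Tm} (h1 : Reduces a a') (h2 : Reduces b b') :
    Reduces (app a b) (app a' b') := (red_appL h1).trans (red_appR h2)

theorem red_lam {a a' : Tm} (h : Reduces a a') : Reduces (lam a) (lam a') :=
  Relation.ReflTransGen.lift (fun x => lam x) (fun _ _ hs => Step.lamCongr hs) _ _ h

theorem red_lamN (m : ℕ) {a a' : Tm} (h : Reduces a a') : Reduces (lamN m a) (lamN m a') := by
  induction m with
  | zero => exact h
  | succ m ih => exact red_lam ih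

theorem step_appList : ∀ (l : List Tm) {a a' : Tm}, Step a a' →
    Step (appList a l) (appList a' l)
  | [], _, _, h => h
  | x :: l, _, _, h => step_appList l (Step.appL x h)

theorem red_appList {l l' : List Tm} (hl : List.Forall₂ Reduces l l') :
    ∀ {t t' : Tm}, Reduces t t' → Reduces (appList t l) (appList t' l') := by
  induction hl with
  | nil => intro t t' h; exact h
  | cons h1 _ ih => intro t t' h; exact ih (red_app h h1)

theorem forall₂_map {α : Type*} {R : Tm → Tm → Prop} :
    ∀ (l : List α) (f g : α → Tm), (∀ x ∈ l, R (f x) (g x)) →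
      List.Forall₂ R (l.map f) (l.map g)
  | [], _, _, _ => List.Forall₂.nil
  | x :: l, f, g, h =>
    List.Forall₂.cons (h x (by simp)) (forall₂_map l f g fun y hy => h y (by simp [hy]))

theorem redN : ∀ (bs : List Tm) (t : Tm),
    Reduces (appList (lamN bs.length t) bs) (msubA 0 bs t)
  | [], _ => Relation.ReflTransGen.refl
  | b :: bs, t => by
    have h1 := Step.beta (lamN bs.length t) b
    rw [subst_lamN] at h1
    show Reduces (appList (app (lam (lamN bs.length t)) b) bs)
      (msubA 0 bs (subst (0 + bs.length) (liftN (0 + bs.length) b) t))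
    simp only [Nat.zero_add] at h1 ⊢
    exact Relation.ReflTransGen.head (step_appList bs h1) (redN bs _)

theorem msubA_head : ∀ (bs : List Tm) (m p : ℕ) (args : List Tm),
    p < bs.length → (∀ b ∈ bs, ClosedBelow 0 b) → (∀ a ∈ args, ClosedBelow m a) →
    msubA m bs (appList (var (m + p)) args)
      = appList (bs.getD (bs.length - 1 - p) (var 0)) args
  | [], _, p, _, hp, _, _ => absurd hp (by simp)
  | b :: bs, m, p, args, hp, hbs, hargs => by
    have hb0 : ClosedBelow 0 b := hbs b (by simp)
    have hσ : liftN (m + bs.length) b = b := liftN_closed _ hb0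
    show msubA m bs (subst (m + bs.length) (liftN (m + bs.length) b)
      (appList (var (m + p)) args)) = _
    rw [hσ, subst_appList]
    have hargs' : args.map (subst (m + bs.length) b) = args := by
      rw [List.map_congr_left (g := id)
        fun a ha => subst_closed a b (Nat.le_add_right m bs.length) (hargs a ha)]
      exact List.map_id args
    rw [hargs']
    by_cases hpL : p = bs.length
    · subst hpL
      rw [subst_var_self]
      rw [msubA_closed bs (closedBelow_appList args b
        (closedBelow_mono b (Nat.zero_le m) hb0) hargs)]
      have : (b :: bs).length - 1 - bs.length = 0 := by simp
      rw [this, List.getD_cons_zero]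
    · have hplt : p < bs.length := by
        have : p < bs.length + 1 := hp
        omega
      rw [subst_var_lt (by omega)]
      rw [msubA_head bs m p args hplt (fun x hx => hbs x (by simp [hx])) hargs]
      have : (b :: bs).length - 1 - p = (bs.length - 1 - p) + 1 := by
        simp only [List.length_cons]; omega
      rw [this, List.getD_cons_succ]

theorem msubA_args : ∀ (bs ds : List Tm) (m q : ℕ),
    q < m →
    (∀ x ∈ bs, ClosedBelow m x ∧ LamFree x) →
    (∀ x ∈ ds, ClosedBelow m x ∧ LamFree x) →
    msubA m bs (appList (var q)
      (ds.map (fun c => appVars (liftN (m + bs.length) c) 0 m)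
        ++ (List.range bs.length).reverse.map (fun l => appVars (var (m + l)) 0 m)))
    = appList (var q) ((ds ++ bs).map (fun c => appVars (liftN m c) 0 m))
  | [], ds, m, q, _, _, _ => by
    show appList (var q) _ = _
    simp [msubA]
  | b :: bs, ds, m, q, hq, hbs, hds => by
    have hb := hbs b (by simp)
    have hK : q < m + bs.length := by omega
    have hrange : (List.range (bs.length + 1)).reverse
        = bs.length :: (List.range bs.length).reverse := by
      rw [List.range_succ, List.reverse_append]; rfl
    show msubA m bs (subst (m + bs.length) (liftN (m + bs.length) b)
      (appList (var q) _)) = _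
    rw [subst_appList, subst_var_lt hK]
    rw [List.length_cons, hrange, List.map_cons, List.map_append, List.map_cons, List.map_map,
      List.map_map]
    -- rewrite the three kinds of mapped elements
    have hd : ds.map (subst (m + bs.length) (liftN (m + bs.length) b) ∘
        fun c => appVars (liftN (m + (bs.length + 1)) c) 0 m)
        = ds.map fun c => appVars (liftN (m + bs.length) c) 0 m := by
      apply List.map_congr_left
      intro c hc
      show subst (m + bs.length) _ (appVars (liftN (m + (bs.length + 1)) c) 0 m) = _
      rw [subst_appVars _ _ _ (by omega)]
      have e : m + (bs.length + 1) = (m + bs.length) + 1 := by omega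
      rw [e, subst_liftN_succ c (hds c hc).2]
    have hg : subst (m + bs.length) (liftN (m + bs.length) b)
        (appVars (var (m + bs.length)) 0 m)
        = appVars (liftN (m + bs.length) b) 0 m := by
      rw [subst_appVars _ _ _ (by omega), subst_var_self]
    have hr : (List.range bs.length).reverse.map (subst (m + bs.length) (liftN (m + bs.length) b) ∘
        fun l => appVars (var (m + l)) 0 m)
        = (List.range bs.length).reverse.map fun l => appVars (var (m + l)) 0 m := by
      apply List.map_congr_left
      intro l hl
      have hl' : l < bs.length := by
        rw [List.mem_reverse, List.mem_range] at hl; exact hl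
      show subst (m + bs.length) _ (appVars (var (m + l)) 0 m) = _
      rw [subst_appVars _ _ _ (by omega), subst_var_lt (by omega)]
    rw [hd, hg, hr]
    have hre : ds.map (fun c => appVars (liftN (m + bs.length) c) 0 m)
        ++ appVars (liftN (m + bs.length) b) 0 m
          :: (List.range bs.length).reverse.map (fun l => appVars (var (m + l)) 0 m)
        = (ds ++ [b]).map (fun c => appVars (liftN (m + bs.length) c) 0 m)
          ++ (List.range bs.length).reverse.map (fun l => appVars (var (m + l)) 0 m) := by
      rw [List.map_append]
      simp
    rw [hre, msubA_args bs (ds ++ [b]) m q hq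
      (fun x hx => hbs x (by simp [hx]))
      (fun x hx => by
        rcases List.mem_append.1 hx with h | h
        · exact hds x h
        · simp at h; subst h; exact hb)]
    congr 1
    simp

theorem W_eq (n j : ℕ) :
    W n j = lamN n (appList (var (2 * n - j))
      ((List.range n).reverse.map fun i => appVars (var i) 0 n)) := by
  rw [W]; congr 1; exact foldl_app_eq _ _ _

theorem M_eq (n j : ℕ) :
    M n j = lamN (2 * n) (appList (var (n - j))
      ((List.range n).reverse.map fun i => appVars (var (n + i)) 0 n)) := by
  rw [M]; congr 1; exact foldl_app_eq _ _ _

theorem V_eq (n j : ℕ) :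
    V n j = lamN (2 * n) (appList (var (n - j))
      ((List.range n).reverse.map fun i => appVars (appVars (var (n + i)) n n) 0 n)) := by
  rw [V]; congr 1; exact foldl_app_eq _ _ _

theorem closedBelow_M (n j : ℕ) (hn : 1 ≤ n) : ClosedBelow 0 (M n j) := by
  rw [M_eq]
  apply closedBelow_lamN
  apply closedBelow_appList
  · exact closedBelow_var (by omega)
  · intro a ha
    simp only [List.mem_map, List.mem_reverse, List.mem_range] at ha
    obtain ⟨i, hi, rfl⟩ := ha
    exact closedBelow_appVars n _ (closedBelow_var (by omega)) (by omega)

theorem As_mem (n : ℕ) {a : Tm}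
    (ha : a ∈ (List.range n).reverse.map fun i => appVars (var i) 0 n) :
    ClosedBelow n a ∧ LamFree a := by
  simp only [List.mem_map, List.mem_reverse, List.mem_range] at ha
  obtain ⟨i, hi, rfl⟩ := ha
  exact ⟨closedBelow_appVars n _ (closedBelow_var (by omega)) (by omega),
    lamFree_appVars n _ trivial⟩

theorem msub_W (n j : ℕ) (hn : 1 ≤ n) (hj : 1 ≤ j) (hjn : j ≤ n) :
    msubA 0 ((List.range n).map fun i => M n (i + 1)) (W n j)
      = lamN n (appList (M n j) ((List.range n).reverse.map fun i => appVars (var i) 0 n)) := by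
  have hlen : ((List.range n).map fun i => M n (i + 1)).length = n := by simp
  rw [W_eq, msubA_lamN]
  congr 1
  have h2 : 2 * n - j = n + (n - j) := by omega
  have h0 : 0 + n = n := by omega
  rw [h2, h0]
  rw [msubA_head _ n (n - j) _ (by rw [hlen]; omega)
    (fun b hb => by
      simp only [List.mem_map, List.mem_range] at hb
      obtain ⟨i, _, rfl⟩ := hb
      exact closedBelow_M n (i + 1) hn)
    (fun a ha => (As_mem n ha).1)]
  congr 1
  rw [hlen]
  have hidx : n - 1 - (n - j) = j - 1 := by omega
  rw [hidx, List.getD_eq_getElem _ _ (by simp; omega)]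
  simp only [List.getElem_map, List.getElem_range]
  congr 1
  omega

theorem red_MAs (n j : ℕ) (hn : 1 ≤ n) (hj : 1 ≤ j) (hjn : j ≤ n) :
    Reduces (lamN n (appList (M n j) ((List.range n).reverse.map fun i => appVars (var i) 0 n)))
      (V n j) := by
  have hlen : ((List.range n).reverse.map fun i => appVars (var i) 0 n).length = n := by simp
  rw [V_eq, show 2 * n = n + n from by omega, lamN_add]
  apply red_lamN
  rw [M_eq, show 2 * n = n + n from by omega, lamN_add]
  have h1 := redN ((List.range n).reverse.map fun i => appVars (var i) 0 n)
    (lamN n (appList (var (n - j)) ((List.range n).reverse.map fun i => appVars (var (n + i)) 0 n)))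
  rw [hlen] at h1
  rw [msubA_lamN] at h1
  have h0 : 0 + n = n := by omega
  rw [h0] at h1
  have h2 := msubA_args ((List.range n).reverse.map fun i => appVars (var i) 0 n) [] n (n - j)
    (by omega) (fun x hx => As_mem n hx) (by simp)
  rw [List.map_nil, List.nil_append, hlen, List.nil_append] at h2
  rw [h2] at h1
  have h3 : ((List.range n).reverse.map fun i => appVars (var i) 0 n).map
      (fun c => appVars (liftN n c) 0 n)
      = (List.range n).reverse.map fun i => appVars (appVars (var (n + i)) n n) 0 n := by
    rw [List.map_map]
    apply List.map_congr_left
    intro i hi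
    show appVars (liftN n (appVars (var i) 0 n)) 0 n = _
    rw [liftN_appVars, liftN_var]
    have e1 : i + n = n + i := by omega
    have e2 : 0 + n = n := by omega
    rw [e1, e2]
  rw [h3] at h1
  exact h1

/-- Böhm's relation, n-ary: for n ≥ 1, 1 ≤ k ≤ n,
(Φ_k^n M_1^n ⋯ M_n^n) ↠ Ψ_k^n  (reflexive-transitive closure of βη-reduction). -/
theorem boehm_relation (n k : ℕ) (hn : 1 ≤ n) (hk : 1 ≤ k) (hkn : k ≤ n) :
    Reduces (appList (Phi n k) ((List.range n).map fun i => M n (i + 1)))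
      (Psi n k) := by
  have hlenM : ((List.range n).map fun i => M n (i + 1)).length = n := by simp
  have h1 : Reduces (appList (Phi n k) ((List.range n).map fun i => M n (i + 1)))
      (msubA 0 ((List.range n).map fun i => M n (i + 1))
        (appList (W n k) ((List.range n).map fun i => W n (i + 1)))) := by
    have := redN ((List.range n).map fun i => M n (i + 1))
      (appList (W n k) ((List.range n).map fun i => W n (i + 1)))
    rw [hlenM] at this
    exact this
  rw [msubA_appList, msub_W n k hn hk hkn] at h1
  have hWs : ((List.range n).map fun i => W n (i + 1)).map
      (msubA 0 ((List.range n).map fun i => M n (i + 1)))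
      = (List.range n).map fun i =>
          lamN n (appList (M n (i + 1))
            ((List.range n).reverse.map fun i => appVars (var i) 0 n)) := by
    rw [List.map_map]
    apply List.map_congr_left
    intro i hi
    simp only [List.mem_range] at hi
    exact msub_W n (i + 1) hn (by omega) (by omega)
  rw [hWs] at h1
  refine h1.trans ?_
  rw [Psi]
  exact red_appList
    (forall₂_map _ _ _ fun i hi => by
      simp only [List.mem_range] at hi
      exact red_MAs n (i + 1) hn (by omega) (by omega))
    (red_MAs n k hn hk hkn)

end Tm
end LC
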